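/- Let α_1, …, α_{N+N_r−1} be pairwise distinct nonzero elements of a field F, let S_n = V G_n^{-1} and let G̃ be the N_r × (N_r−1) matrix with zero first row and Vandermonde rows (1, α_{N+i}, …, α_{N+i}^{N_r−2}) for i = 1,…,N_r−1. Then for every subset S ⊆ {1,…,N} \ {n} with |S| ≤ N_r − 1, the submatrix of S_n · G̃ consisting of the rows indexed by S has rank |S|. -/

import Mathlib

variable {F : Type} [Field F] {N r : ℕ}

/-- The `N × (r+1)` Vandermonde matrix `V` with nodes `α_1, …, α_N`. -/
def Vmat (α : Fin N → F) : Matrix (Fin N) (Fin (r + 1)) F :=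
  Matrix.of fun i j => α i ^ (j : ℕ)

/-- The `(r+1) × (r+1)` Vandermonde matrix `G_n` with row nodes
`α_n, β_1, …, β_r` (where `β_i` plays the role of `α_{N+i}`). -/
def Gmat (α : Fin N → F) (β : Fin r → F) (n : Fin N) :
    Matrix (Fin (r + 1)) (Fin (r + 1)) F :=
  Matrix.of fun i j => ((Fin.cons (α n) β : Fin (r + 1) → F) i) ^ (j : ℕ)

/-- The `(r+1) × r` matrix `G̃` whose first row is zero and whose row `i+1`
is the Vandermonde row `(1, β_i, …, β_i^{r-1})`. -/
def Gtil (β : Fin r → F) : Matrix (Fin (r + 1)) (Fin r) F :=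
  Matrix.of fun i j => ((Fin.cons 0 (fun i' => β i' ^ (j : ℕ)) : Fin (r + 1) → F) i)

/-- The matrix `S_n = V · G_n⁻¹`. -/
noncomputable def Smat (α : Fin N → F) (β : Fin r → F) (n : Fin N) :
    Matrix (Fin N) (Fin (r + 1)) F :=
  Vmat α * (Gmat α β n)⁻¹

open Polynomial in
/-- Rows of a (possibly rectangular) Vandermonde matrix with at most `r+1`
pairwise-distinct nodes are linearly independent. -/
lemma vandermonde_rows_linearIndependent {F : Type} [Field F] {r : ℕ}
    {ι : Type} [Fintype ι] [DecidableEq ι] (x : ι → F)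
    (hx : Function.Injective x) (hcard : Fintype.card ι ≤ r + 1) :
    LinearIndependent F (fun i => (fun j : Fin (r + 1) => x i ^ (j : ℕ))) := by
  rw [Fintype.linearIndependent_iff]
  intro c hc i0
  have hcomp : ∀ j : Fin (r + 1), ∑ i, c i * x i ^ (j : ℕ) = 0 := by
    intro j
    have := congrFun hc j
    simpa using this
  set p : F[X] := ∏ i ∈ Finset.univ.erase i0, (X - C (x i)) with hp
  have hdeg : p.natDegree < r + 1 := by
    have h1 : p.natDegree = (Finset.univ.erase i0).card := by
      rw [hp, natDegree_prod _ _ (fun i _ => X_sub_C_ne_zero (x i))]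
      simp
    rw [h1, Finset.card_erase_of_mem (Finset.mem_univ i0), Finset.card_univ]
    have := Fintype.card_pos_iff.mpr ⟨i0⟩
    omega
  have heval : ∀ y : F, p.eval y = ∑ j : Fin (r + 1), p.coeff (j : ℕ) * y ^ (j : ℕ) := by
    intro y
    rw [eval_eq_sum_range' hdeg, Fin.sum_univ_eq_sum_range (fun j => p.coeff j * y ^ j)]
  have hsum : ∑ i, c i * p.eval (x i) = 0 := by
    simp_rw [heval, Finset.mul_sum]
    rw [Finset.sum_comm]
    simp_rw [show ∀ (i : ι) (j : Fin (r+1)), c i * (p.coeff (j:ℕ) * x i ^ (j:ℕ))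
        = p.coeff (j:ℕ) * (c i * x i ^ (j:ℕ)) from fun i j => by ring,
      ← Finset.mul_sum]
    simp [hcomp]
  have hzero : ∀ i ∈ Finset.univ, i ≠ i0 → c i * p.eval (x i) = 0 := by
    intro i _ hi
    have : p.eval (x i) = 0 := by
      rw [hp, eval_prod]
      exact Finset.prod_eq_zero (Finset.mem_erase.mpr ⟨hi, Finset.mem_univ i⟩) (by simp)
    rw [this, mul_zero]
  have hsingle : c i0 * p.eval (x i0) = 0 := by
    rw [← Finset.sum_eq_single i0 hzero (fun h => absurd (Finset.mem_univ i0) h)]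
    exact hsum
  have hne : p.eval (x i0) ≠ 0 := by
    rw [hp, eval_prod]
    refine Finset.prod_ne_zero_iff.mpr fun i hi => ?_
    have : x i0 ≠ x i := fun h => (Finset.mem_erase.mp hi).1 (hx h.symm)
    simpa [sub_eq_zero] using this
  exact (mul_eq_zero.mp hsingle).resolve_right hne

/-- For `S ⊆ [N] \ {n}` with `|S| ≤ N_r − 1 = r`, the rows of
`S_n · G̃` indexed by `S` have rank `|S|`. -/
theorem Smat_mul_Gtil_rows_rank
    {F : Type} [Field F] (N r : ℕ) (hN : 1 ≤ N)
    (α : Fin N → F) (β : Fin r → F)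
    (hinj : Function.Injective (Sum.elim α β))
    (h0 : ∀ x : Fin N ⊕ Fin r, Sum.elim α β x ≠ 0)
    (n : Fin N)
    (S : Finset (Fin N)) (hnS : n ∉ S) (hS : S.card ≤ r) :
    ((Smat α β n * Gtil β).submatrix
      (fun i : Fin S.card => ((S.orderIsoOfFin rfl i : S) : Fin N)) id).rank = S.card := by
  classical
  set s : Fin S.card → Fin N := fun i => ((S.orderIsoOfFin rfl i : S) : Fin N) with hs
  have hsmem : ∀ i, s i ∈ S := fun i => (S.orderIsoOfFin rfl i).2
  have hs_inj : Function.Injective s := fun a b h => by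
    have := (S.orderIsoOfFin rfl).injective (Subtype.ext h)
    exact this
  -- basic injectivity facts
  have hα_inj : Function.Injective α := fun a b h => by
    have := hinj (show Sum.elim α β (Sum.inl a) = Sum.elim α β (Sum.inl b) from h)
    exact Sum.inl.inj this
  have hβ_inj : Function.Injective β := fun a b h => by
    have := hinj (show Sum.elim α β (Sum.inr a) = Sum.elim α β (Sum.inr b) from h)
    exact Sum.inr.inj this
  have hαβ : ∀ a b, α a ≠ β b := fun a b h => by
    have := hinj (show Sum.elim α β (Sum.inl a) = Sum.elim α β (Sum.inr b) from h)
    simp at this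
  -- G_n is invertible
  have hGdet : (Gmat α β n).det ≠ 0 := by
    have : Gmat α β n = Matrix.vandermonde (Fin.cons (α n) β) := rfl
    rw [this, Matrix.det_vandermonde_ne_zero_iff]
    exact Fin.cons_injective_iff.mpr ⟨by rintro ⟨b, hb⟩; exact hαβ n b hb.symm, hβ_inj⟩
  have hSG : Smat α β n * Gmat α β n = Vmat α := by
    show Vmat (r := r) α * (Gmat α β n)⁻¹ * Gmat α β n = Vmat α
    rw [Matrix.mul_assoc, Matrix.nonsing_inv_mul _ (isUnit_iff_ne_zero.mpr hGdet), Matrix.mul_one]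
  -- factor the submatrix
  have hfac : (Smat α β n * Gtil β).submatrix s id
      = ((Smat α β n).submatrix s Fin.succ) * Matrix.vandermonde β := by
    ext i j
    simp only [Matrix.submatrix_apply, Matrix.mul_apply, id_eq, Gtil, Matrix.of_apply,
      Matrix.vandermonde]
    rw [Fin.sum_univ_succ]
    simp
  rw [hfac]
  have hVdet : IsUnit (Matrix.vandermonde β).det :=
    isUnit_iff_ne_zero.mpr (Matrix.det_vandermonde_ne_zero_iff.mpr hβ_inj)
  rw [Matrix.rank_mul_eq_left_of_isUnit_det _ _ hVdet]
  -- show rows of the left factor are linearly independent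
  have hLI : LinearIndependent F ((Smat α β n).submatrix s Fin.succ).row := by
    rw [Fintype.linearIndependent_iff]
    intro c hc i0
    set v : Fin (r + 1) → F := fun k => ∑ i, c i * Smat α β n (s i) k with hv
    have hvsucc : ∀ j : Fin r, v j.succ = 0 := by
      intro j
      have h := congrFun hc j
      simp only [Finset.sum_apply, Pi.smul_apply, Matrix.row_apply, Matrix.submatrix_apply, smul_eq_mul,
        Pi.zero_apply] at h
      exact h
    -- for each column j of G_n : ∑ c_i α_{s i}^j = v 0 * α_n ^ j
    have hkey : ∀ j : Fin (r + 1),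
        ∑ i, c i * α (s i) ^ (j : ℕ) = v 0 * α n ^ (j : ℕ) := by
      intro j
      have hG : ∀ i : Fin S.card,
          ∑ k, Smat α β n (s i) k * Gmat α β n k j = α (s i) ^ (j : ℕ) := by
        intro i
        have := congrFun (congrFun hSG (s i)) j
        simpa [Matrix.mul_apply, Vmat] using this
      have h1 : ∑ k, v k * Gmat α β n k j = ∑ i, c i * α (s i) ^ (j : ℕ) := by
        calc ∑ k, v k * Gmat α β n k j
            = ∑ k, ∑ i, c i * Smat α β n (s i) k * Gmat α β n k j := by
              simp [hv, Finset.sum_mul]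
          _ = ∑ i, ∑ k, c i * Smat α β n (s i) k * Gmat α β n k j := Finset.sum_comm
          _ = ∑ i, c i * α (s i) ^ (j : ℕ) := by
              refine Finset.sum_congr rfl fun i _ => ?_
              simp_rw [mul_assoc, ← Finset.mul_sum, hG i]
      have h2 : ∑ k, v k * Gmat α β n k j = v 0 * α n ^ (j : ℕ) := by
        rw [Fin.sum_univ_succ]
        simp [hvsucc, Gmat]
      rw [← h1, h2]
    -- apply Vandermonde row independence with nodes α n, α (s i)
    have hx_inj : Function.Injective (Fin.cons (α n) (fun i => α (s i)) :
        Fin (S.card + 1) → F) := by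
      refine Fin.cons_injective_iff.mpr ⟨?_, fun a b h => hs_inj (hα_inj h)⟩
      rintro ⟨i, hi⟩
      exact hnS (hα_inj hi ▸ hsmem i)
    have hLI' := vandermonde_rows_linearIndependent (r := r)
      (Fin.cons (α n) (fun i => α (s i))) hx_inj (by simpa using Nat.succ_le_succ hS)
    rw [Fintype.linearIndependent_iff] at hLI'
    have := hLI' (Fin.cons (-(v 0)) c) ?_ i0.succ
    · simpa using this
    · funext j
      rw [Fin.sum_univ_succ]
      simp only [Fin.cons_zero, Fin.cons_succ, Pi.add_apply, Pi.smul_apply, smul_eq_mul,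
        Finset.sum_apply, Pi.zero_apply]
      rw [hkey j]
      ring
  rw [hLI.rank_matrix, Fintype.card_fin]
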